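/- Fix 0 < q ≤ 2 and b ∈ ℝ, and let ω ≥ |b|/2 with ω > 0. If h is a global minimizer of F(ω, q, b), then |h| ≤ |b|/2. -/

import Mathlib

/-- The scalar objective `F(ω, q, b)(β) = (1/2)(b − β)² + (ω^(2−q)/q)·|β|^q`,
with real-exponent powers (`rpow`). -/
noncomputable def F (ω q b β : ℝ) : ℝ :=
  (1 / 2) * (b - β) ^ 2 + (ω ^ (2 - q) / q) * |β| ^ q

lemma key_pos (q b ω h : ℝ) (hq0 : 0 < q) (hq2 : q ≤ 2)
    (hω : 0 < ω) (hωb : |b| / 2 ≤ ω)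
    (hmin : ∀ β : ℝ, F ω q b h ≤ F ω q b β) (hpos : 0 < h) :
    h ≤ |b| / 2 := by
  set f : ℝ → ℝ := fun β => (1/2)*(b-β)^2 + (ω ^ (2-q)/q) * β ^ q with hf
  have hfF : ∀ β : ℝ, 0 < β → f β = F ω q b β := by
    intro β hβ
    simp [hf, F, abs_of_pos hβ]
  have hd : HasDerivAt f (h - b + ω ^ (2-q) * h ^ (q-1)) h := by
    have h1 : HasDerivAt (fun β : ℝ => b - β) (-1) h := (hasDerivAt_id h).const_sub b
    have h2 := (h1.pow 2).const_mul (1/2 : ℝ)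
    have h3 := (Real.hasDerivAt_rpow_const (x := h) (p := q) (Or.inl hpos.ne')).const_mul
      (ω ^ (2-q)/q)
    have := h2.add h3
    refine this.congr_deriv ?_
    field_simp [hq0.ne']
    ring
  have hloc : IsLocalMin f h := by
    have hmem : ∀ᶠ β in nhds h, (0:ℝ) < β := eventually_gt_nhds hpos
    filter_upwards [hmem] with β hβ
    rw [hfF β hβ, hfF h hpos]
    exact hmin β
  have hzero : h - b + ω ^ (2-q) * h ^ (q-1) = 0 := hloc.hasDerivAt_eq_zero hd
  have hP : 0 < ω ^ (2-q) * h ^ (q-1) :=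
    mul_pos (Real.rpow_pos_of_pos hω _) (Real.rpow_pos_of_pos hpos _)
  have hb0 : 0 < b := by linarith
  rw [abs_of_pos hb0] at *
  by_contra hlt
  push_neg at hlt
  have hPh : ω ^ (2-q) * h ^ (q-1) < h := by linarith
  have hq1pos : 0 < h ^ (q-1) := Real.rpow_pos_of_pos hpos _
  rcases lt_or_eq_of_le hq2 with hq2' | hq2'
  · -- q < 2 : deduce ω < h
    have hsplit : h = h ^ (2-q) * h ^ (q-1) := by
      rw [← Real.rpow_add hpos]
      norm_num
    have h1 : ω ^ (2-q) < h ^ (2-q) := by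
      have h2 : ω ^ (2-q) * h ^ (q-1) < h ^ (2-q) * h ^ (q-1) := by
        rw [← hsplit]; exact hPh
      exact lt_of_mul_lt_mul_right h2 hq1pos.le
    have hωh : ω < h := by
      by_contra hle
      push_neg at hle
      exact absurd h1 (not_lt.2 (Real.rpow_le_rpow hpos.le hle (by linarith)))
    -- AM-GM : b = h + P ≥ 2√(h·P) = 2√(ω^(2-q) h^q) > 2√(ω²) = 2ω ≥ b
    have hhP : h * (ω ^ (2-q) * h ^ (q-1)) = ω ^ (2-q) * h ^ q := by
      have e1 : h ^ (q-1) * h ^ (1:ℝ) = h ^ q := by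
        rw [← Real.rpow_add hpos]; ring_nf
      rw [Real.rpow_one] at e1
      rw [mul_comm, mul_assoc, e1]
    have hsq : 2 * Real.sqrt h * Real.sqrt (ω ^ (2-q) * h ^ (q-1))
        ≤ h + ω ^ (2-q) * h ^ (q-1) := by
      have := two_mul_le_add_sq (Real.sqrt h) (Real.sqrt (ω ^ (2-q) * h ^ (q-1)))
      rwa [Real.sq_sqrt hpos.le, Real.sq_sqrt hP.le] at this
    have hs1 : Real.sqrt h * Real.sqrt (ω ^ (2-q) * h ^ (q-1))
        = Real.sqrt (ω ^ (2-q) * h ^ q) := by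
      rw [← Real.sqrt_mul hpos.le, hhP]
    have hargs : ω ^ (2-q) * ω ^ q < ω ^ (2-q) * h ^ q := by
      exact mul_lt_mul_of_pos_left (Real.rpow_lt_rpow hω.le hωh hq0)
        (Real.rpow_pos_of_pos hω _)
    have homega : ω ^ (2-q) * ω ^ q = ω ^ 2 := by
      rw [← Real.rpow_add hω]
      norm_num
    have hsqrt : ω < Real.sqrt (ω ^ (2-q) * h ^ q) := by
      have := Real.sqrt_lt_sqrt (by positivity) hargs
      rwa [homega, Real.sqrt_sq hω.le] at this
    have : 2 * ω < b := by
      have hb : b = h + ω ^ (2-q) * h ^ (q-1) := by linarith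
      nlinarith [hsq, hs1, hsqrt]
    linarith
  · -- q = 2
    rw [← hq2'] at hPh
    rw [show q - q = 0 by ring] at hPh
    have e2 : q - 1 = 1 := by rw [hq2']; norm_num
    rw [e2, Real.rpow_zero, Real.rpow_one, one_mul] at hPh
    exact absurd hPh (lt_irrefl h)

/-- For `0 < q ≤ 2` and `ω ≥ |b|/2` with `ω > 0`: any global minimizer `h` of
`F ω q b` satisfies `|h| ≤ |b|/2`. -/
theorem min_le_half_b (q b ω h : ℝ) (hq0 : 0 < q) (hq2 : q ≤ 2)
    (hω : 0 < ω) (hωb : |b| / 2 ≤ ω)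
    (hmin : ∀ β : ℝ, F ω q b h ≤ F ω q b β) :
    |h| ≤ |b| / 2 := by
  rcases lt_trichotomy h 0 with hneg | hzero | hpos
  · have e : ∀ γ : ℝ, F ω q (-b) γ = F ω q b (-γ) := by
      intro γ
      simp only [F, abs_neg]
      ring_nf
    have hmin' : ∀ β : ℝ, F ω q (-b) (-h) ≤ F ω q (-b) β := by
      intro β
      rw [e (-h), e β, neg_neg]
      exact hmin (-β)
    have := key_pos q (-b) ω (-h) hq0 hq2 hω (by rwa [abs_neg]) hmin' (by linarith)
    rw [abs_neg] at this
    rw [abs_of_neg hneg]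
    exact this
  · rw [hzero]
    simp
    positivity
  · rw [abs_of_pos hpos]
    exact key_pos q b ω h hq0 hq2 hω hωb hmin hpos
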